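/- Let ν be a probability mass function on 𝒳 with full support, let L be a strongly universal prefix code, and let 0 < λ < D(μ1‖ν). For α ∈ (0,1), define N(α) = inf{ n ≥ 1 : −L(X_1^n) − log ν(X_1^n) − nλ ≥ −log α }, where X_1, X_2, … are i.i.d. with distribution μ1. Then as α → 0, E_{μ1}(N(α)) ~ |log α| / (D(μ1‖ν) − λ), i.e., lim_{α→0} E_{μ1}(N(α)) · (D(μ1‖ν) − λ) / |log α| = 1. -/

import Mathlib

open MeasureTheory Filter
open scoped ENNReal NNReal Topology BigOperators Classical
set_option linter.unusedSectionVars false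
set_option maxHeartbeats 1000000

namespace ChangeDetect

variable {𝒳 : Type} [Fintype 𝒳] [Nonempty 𝒳] [MeasurableSpace 𝒳]

/-- A probability mass function on `𝒳`. -/
def IsPMF (p : 𝒳 → ℝ) : Prop := (∀ a, 0 ≤ p a) ∧ ∑ a, p a = 1

/-- A probability mass function on `𝒳` with full support. -/
def IsPosPMF (p : 𝒳 → ℝ) : Prop := (∀ a, 0 < p a) ∧ ∑ a, p a = 1

/-- `L` is a family of length functions of fixed-to-variable prefix codes,
i.e. it satisfies Kraft's inequality for each block length `n`. -/
def Kraft (L : (n : ℕ) → (Fin n → 𝒳) → ℕ) : Prop :=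
  ∀ n : ℕ, ∑ w : Fin n → 𝒳, (2 : ℝ) ^ (-(L n w : ℝ)) ≤ 1

/-- i.i.d. (memoryless) probability of a word. -/
noncomputable def wp (p : 𝒳 → ℝ) {n : ℕ} (w : Fin n → 𝒳) : ℝ := ∏ i, p (w i)

/-- Strong universality of the code `L`:
`R_L^n = sup_μ max_w (L(w) + log₂ μ(w)) = o(n)`, the sup over memoryless sources. -/
def StronglyUniversal (L : (n : ℕ) → (Fin n → 𝒳) → ℕ) : Prop :=
  ∃ R : ℕ → ℝ, Tendsto (fun n => R n / n) atTop (𝓝 0) ∧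
    ∀ (n : ℕ) (μ : 𝒳 → ℝ), IsPosPMF μ → ∀ w : Fin n → 𝒳,
      (L n w : ℝ) + Real.logb 2 (wp μ w) ≤ R n

/-- Kullback–Leibler divergence in bits between two pmfs on `𝒳`. -/
noncomputable def D (p q : 𝒳 → ℝ) : ℝ := ∑ a, p a * Real.logb 2 (p a / q a)

/-- The word `x_{s+1}, …, x_{s+n}` of the sequence `x`. -/
def seg (x : ℕ → 𝒳) (s n : ℕ) : Fin n → 𝒳 := fun i => x (s + (i : ℕ))

/-- `P` is the joint law of a sequence of independent observations with `X_{i+1} ∼ ps i`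
(characterized by its values on cylinder sets). -/
def IsProductLaw (ps : ℕ → 𝒳 → ℝ) (P : Measure (ℕ → 𝒳)) : Prop :=
  IsProbabilityMeasure P ∧
    ∀ (n : ℕ) (w : Fin n → 𝒳),
      P {x | ∀ i : Fin n, x (i : ℕ) = w i} = ∏ i : Fin n, ENNReal.ofReal (ps (i : ℕ) (w i))

/-- `P` is the law of an i.i.d. sequence with marginal pmf `p`. -/
def IsIIDLaw (p : 𝒳 → ℝ) (P : Measure (ℕ → 𝒳)) : Prop := IsProductLaw (fun _ => p) P

/-- The one-sided test statistic `−L(x_{s+1}^{s+n}) − log₂ ν(x_{s+1}^{s+n}) − nλ`. -/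
noncomputable def stat (L : (n : ℕ) → (Fin n → 𝒳) → ℕ) (ν : 𝒳 → ℝ) (lam : ℝ)
    (s : ℕ) (x : ℕ → 𝒳) (n : ℕ) : ℝ :=
  -(L n (seg x s n) : ℝ) - Real.logb 2 (wp ν (seg x s n)) - n * lam

/-- The auxiliary stopping time
`N(α) = inf {n ≥ 1 : −L(x_{s+1}^{s+n}) − log₂ ν(x_{s+1}^{s+n}) − nλ ≥ −log₂ α}`
(`⊤` if the set is empty). -/
noncomputable def Naux (L : (n : ℕ) → (Fin n → 𝒳) → ℕ) (ν : 𝒳 → ℝ) (lam α : ℝ)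
    (s : ℕ) (x : ℕ → 𝒳) : ℕ∞ :=
  sInf {m : ℕ∞ | ∃ n : ℕ, m = n ∧ 1 ≤ n ∧ -Real.logb 2 α ≤ stat L ν lam s x n}

/-- The CUSUM statistic `−L(x_{s+k+1}^{s+n}) − log₂ ν(x_{s+k+1}^{s+n}) − nλ`
(here `0 ≤ k < n`, corresponding to the 1-indexed segment `x_{k+1}^{n}` after `s`
training samples). -/
noncomputable def cstat (L : (n : ℕ) → (Fin n → 𝒳) → ℕ) (ν : 𝒳 → ℝ) (lam : ℝ)
    (s : ℕ) (x : ℕ → 𝒳) (k n : ℕ) : ℝ :=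
  -(L (n - k) (seg x (s + k) (n - k)) : ℝ)
    - Real.logb 2 (wp ν (seg x (s + k) (n - k))) - n * lam

/-- The CUSUM stopping time
`M(γ) = inf {n ≥ 1 : max_{1 ≤ k ≤ n} (−L(x_k^n) − log₂ ν(x_k^n) − nλ) ≥ log₂ γ}`. -/
noncomputable def Mstop (L : (n : ℕ) → (Fin n → 𝒳) → ℕ) (ν : 𝒳 → ℝ) (lam γ : ℝ)
    (s : ℕ) (x : ℕ → 𝒳) : ℕ∞ :=
  sInf {m : ℕ∞ | ∃ n : ℕ, m = n ∧ 1 ≤ n ∧ ∃ k < n, Real.logb 2 γ ≤ cstat L ν lam s x k n}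

/-- Expectation of an (extended) stopping time. -/
noncomputable def lexp (P : Measure (ℕ → 𝒳)) (N : (ℕ → 𝒳) → ℕ∞) : ℝ≥0∞ :=
  ∫⁻ x, (N x : ℝ≥0∞) ∂P

/-- The σ-algebra generated by the first `m` coordinates. -/
def firstCoords (𝒳 : Type) [MeasurableSpace 𝒳] (m : ℕ) : MeasurableSpace (ℕ → 𝒳) :=
  MeasurableSpace.comap (fun x => (fun i : Fin m => x (i : ℕ))) inferInstance

/-- An (extended) stopping variable of the observation sequence. -/
def IsSeqStoppingTime (N : (ℕ → 𝒳) → ℕ∞) : Prop :=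
  ∀ n : ℕ, MeasurableSet[firstCoords 𝒳 n] {x | N x ≤ (n : ℕ∞)}

/-- Lorden's worst-case expected delay
`Ē₁(N) = sup_{m ≥ 1} ess sup E_m[(N − m + 1)⁺ | X_1, …, X_{m−1}]`,
where under `P_m` the first `m − 1` observations are i.i.d. with the pre-change law
(the full i.i.d. pre-change law is `P0`) and the observations from time `m` on are
i.i.d. with the post-change law (full i.i.d. law `P1`).  The conditional expectation
given `X_1, …, X_{m−1}` is realized by integrating out the coordinates from `m` on. -/
noncomputable def lordenE1 (P0 P1 : Measure (ℕ → 𝒳)) (N : (ℕ → 𝒳) → ℕ∞) : ℝ≥0∞ :=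
  ⨆ m : ℕ, essSup
    (fun x => ∫⁻ y, ((N (fun i => if i < m then x i else y i) : ℝ≥0∞) - m) ∂P1) P0

/-- Empirical distribution of the first `n0` samples of the sequence `x`. -/
noncomputable def emp (n0 : ℕ) (x : ℕ → 𝒳) (a : 𝒳) : ℝ :=
  ((Finset.range n0).filter (fun i => x i = a)).card / n0

/-- The optimal worst-case delay over all stopping times with `E₀(S) ≥ γ`
(Lorden's class `S_γ`). -/
noncomputable def minDelay (P0 P1 : Measure (ℕ → 𝒳)) (γ : ℝ) : ℝ≥0∞ :=
  sInf {r : ℝ≥0∞ | ∃ N : (ℕ → 𝒳) → ℕ∞, IsSeqStoppingTime N ∧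
    ENNReal.ofReal γ ≤ lexp P0 N ∧ r = lordenE1 P0 P1 N}


-- ============ auxiliary development ============

noncomputable def Nc (L : (n : ℕ) → (Fin n → 𝒳) → ℕ) (ν : 𝒳 → ℝ) (lam c : ℝ)
    (x : ℕ → 𝒳) : ℕ∞ :=
  sInf {m : ℕ∞ | ∃ n : ℕ, m = n ∧ 1 ≤ n ∧ c ≤ stat L ν lam 0 x n}

lemma Nc_le_iff {L : (n : ℕ) → (Fin n → 𝒳) → ℕ} {ν : 𝒳 → ℝ} {lam c : ℝ}
    {x : ℕ → 𝒳} {n : ℕ} :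
    Nc L ν lam c x ≤ (n : ℕ∞) ↔ ∃ k, 1 ≤ k ∧ k ≤ n ∧ c ≤ stat L ν lam 0 x k := by
  constructor
  · intro h
    by_contra hc
    push_neg at hc
    have h2 : ((n+1 : ℕ) : ℕ∞) ≤ Nc L ν lam c x := by
      refine le_sInf ?_
      rintro m ⟨k, rfl, hk1, hk2⟩
      have hkn : ¬ k ≤ n := fun hle => absurd hk2 (not_le.mpr (hc k hk1 hle))
      exact_mod_cast Nat.succ_le_of_lt (Nat.lt_of_not_le hkn)
    have := h2.trans h
    exact absurd (by exact_mod_cast this : n + 1 ≤ n) (by omega)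
  · rintro ⟨k, hk1, hkn, hs⟩
    refine le_trans (sInf_le ⟨k, rfl, hk1, hs⟩) ?_
    exact_mod_cast hkn

lemma wp_nonneg {p : 𝒳 → ℝ} (hp : ∀ a, 0 ≤ p a) {n : ℕ} (w : Fin n → 𝒳) :
    0 ≤ wp p w := Finset.prod_nonneg fun i _ => hp _

lemma cyl_measure {μ1 : 𝒳 → ℝ} {P : Measure (ℕ → 𝒳)} (h : IsIIDLaw μ1 P)
    (hpos : ∀ a, 0 ≤ μ1 a) (n : ℕ) (w : Fin n → 𝒳) :
    P {x | seg x 0 n = w} = ENNReal.ofReal (wp μ1 w) := by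
  have hset : {x : ℕ → 𝒳 | seg x 0 n = w} = {x | ∀ i : Fin n, x (i:ℕ) = w i} := by
    ext x
    constructor
    · intro hx i
      have := congrFun hx i
      simpa [seg] using this
    · intro hx
      funext i
      simpa [seg] using hx i
  rw [hset, h.2 n w, wp, ENNReal.ofReal_prod_of_nonneg (fun i _ => hpos _)]

lemma event_bound {μ1 : 𝒳 → ℝ} {P : Measure (ℕ → 𝒳)} (h : IsIIDLaw μ1 P)
    (hpos : ∀ a, 0 ≤ μ1 a) (n : ℕ) (p : (Fin n → 𝒳) → Prop) :
    P {x | p (seg x 0 n)} ≤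
      ENNReal.ofReal (∑ w ∈ Finset.univ.filter p, wp μ1 w) := by
  have hsub : {x | p (seg x 0 n)} ⊆
      ⋃ w ∈ Finset.univ.filter p, {x | seg x 0 n = w} := by
    intro x hx
    simp only [Set.mem_iUnion]
    exact ⟨seg x 0 n, Finset.mem_filter.mpr ⟨Finset.mem_univ _, hx⟩, rfl⟩
  calc P {x | p (seg x 0 n)}
      ≤ ∑ w ∈ Finset.univ.filter p, P {x | seg x 0 n = w} :=
        (measure_mono hsub).trans (measure_biUnion_finset_le _ _)
    _ = ENNReal.ofReal (∑ w ∈ Finset.univ.filter p, wp μ1 w) := by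
        rw [ENNReal.ofReal_sum_of_nonneg
          (fun w _ => show (0:ℝ) ≤ wp μ1 w from wp_nonneg hpos w)]
        exact Finset.sum_congr rfl fun w _ => cyl_measure h hpos n w

lemma sum_prod_fn (g : 𝒳 → ℝ) (n : ℕ) :
    ∑ w : Fin n → 𝒳, ∏ i, g (w i) = (∑ a, g a) ^ n := by
  calc ∑ w : Fin n → 𝒳, ∏ i, g (w i)
      = ∑ w ∈ Fintype.piFinset (fun _ : Fin n => Finset.univ), ∏ i, g (w i) := by
        rw [Fintype.piFinset_univ]
    _ = ∏ _i : Fin n, ∑ a, g a := (Finset.prod_univ_sum _ _).symm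
    _ = (∑ a, g a) ^ n := by simp [Finset.prod_const]

lemma exp_quadratic {x : ℝ} (h : |x| ≤ 1) : Real.exp x ≤ 1 + x + x ^ 2 := by
  have h2 := Real.exp_bound h (by norm_num : 0 < 2)
  have hs : ∑ m ∈ Finset.range 2, x ^ m / (Nat.factorial m : ℝ) = 1 + x := by
    simp [Finset.sum_range_succ, Nat.factorial]
  rw [hs] at h2
  have h3 := (abs_le.mp h2).2
  rw [sq_abs] at h3
  norm_num [Nat.factorial] at h3
  nlinarith [sq_nonneg x]

lemma mgf_bound (p z : 𝒳 → ℝ) (hp0 : ∀ a, 0 ≤ p a) (hp1 : ∑ a, p a = 1)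
    (hzm : ∑ a, p a * z a = 0) (B t : ℝ) (hzB : ∀ a, |z a| ≤ B)
    (ht0 : 0 ≤ t) (htB : t * B ≤ 1) :
    ∑ a, p a * Real.exp (t * z a) ≤ Real.exp (t ^ 2 * B ^ 2) := by
  have key : ∀ a, Real.exp (t * z a) ≤ 1 + t * z a + t ^ 2 * B ^ 2 := by
    intro a
    have habs : |t * z a| ≤ 1 := by
      rw [abs_mul, abs_of_nonneg ht0]
      calc t * |z a| ≤ t * B := mul_le_mul_of_nonneg_left (hzB a) ht0
        _ ≤ 1 := htB
    refine (exp_quadratic habs).trans ?_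
    have hB0 : 0 ≤ B := le_trans (abs_nonneg _) (hzB a)
    have h1 : (t * z a) ^ 2 ≤ t ^ 2 * B ^ 2 := by
      rw [mul_pow]
      refine mul_le_mul_of_nonneg_left ?_ (sq_nonneg t)
      have := hzB a
      nlinarith [abs_nonneg (z a), sq_abs (z a)]
    linarith
  calc ∑ a, p a * Real.exp (t * z a)
      ≤ ∑ a, p a * (1 + t * z a + t ^ 2 * B ^ 2) :=
        Finset.sum_le_sum fun a _ => mul_le_mul_of_nonneg_left (key a) (hp0 a)
    _ = 1 + t ^ 2 * B ^ 2 := by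
        have e1 : ∀ a : 𝒳, p a * (1 + t * z a + t ^ 2 * B ^ 2)
            = p a + t * (p a * z a) + p a * (t ^ 2 * B ^ 2) := by intro a; ring
        simp only [e1, Finset.sum_add_distrib, ← Finset.mul_sum, ← Finset.sum_mul]
        rw [hp1, hzm]
        ring
    _ ≤ Real.exp (t ^ 2 * B ^ 2) := by linarith [Real.add_one_le_exp (t ^ 2 * B ^ 2)]

lemma dev_bound (p z : 𝒳 → ℝ) (hp0 : ∀ a, 0 ≤ p a) (hp1 : ∑ a, p a = 1)
    (hzm : ∑ a, p a * z a = 0) (B θ : ℝ) (hB : 0 < B) (hθ : 0 < θ)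
    (hzB : ∀ a, |z a| ≤ B) :
    ∃ ρ : ℝ, 0 < ρ ∧ ρ < 1 ∧ ∀ (n : ℕ) (u : ℝ), θ * n ≤ u →
      ∑ w ∈ Finset.univ.filter (fun w : Fin n → 𝒳 => u < ∑ i, z (w i)), wp p w
        ≤ ρ ^ n := by
  set t := min (1 / B) (θ / (2 * B ^ 2)) with ht
  have ht0 : 0 < t := lt_min (by positivity) (by positivity)
  refine ⟨Real.exp (-(t * θ) / 2), Real.exp_pos _, ?_, ?_⟩
  · rw [Real.exp_lt_one_iff]
    nlinarith
  intro n u hu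
  have hwp0 : ∀ w : Fin n → 𝒳, 0 ≤ wp p w := fun w => Finset.prod_nonneg fun i _ => hp0 _
  have step1 : ∑ w ∈ Finset.univ.filter (fun w : Fin n → 𝒳 => u < ∑ i, z (w i)), wp p w
      ≤ Real.exp (-(t * u)) * ∑ w : Fin n → 𝒳, wp p w * Real.exp (t * ∑ i, z (w i)) := by
    rw [Finset.mul_sum]
    refine le_trans (Finset.sum_le_sum ?_) (Finset.sum_le_sum_of_subset_of_nonneg
      (Finset.filter_subset _ _) (fun w _ _ => mul_nonneg (Real.exp_pos _).le
        (mul_nonneg (hwp0 w) (Real.exp_pos _).le)))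
    intro w hw
    have hw' : u < ∑ i, z (w i) := (Finset.mem_filter.mp hw).2
    have h1 : (1 : ℝ) ≤ Real.exp (-(t*u)) * Real.exp (t * ∑ i, z (w i)) := by
      rw [← Real.exp_add, ← Real.exp_zero]
      apply Real.exp_le_exp.mpr
      nlinarith
    calc wp p w = wp p w * 1 := (mul_one _).symm
      _ ≤ wp p w * (Real.exp (-(t*u)) * Real.exp (t * ∑ i, z (w i))) :=
          mul_le_mul_of_nonneg_left h1 (hwp0 w)
      _ = Real.exp (-(t*u)) * (wp p w * Real.exp (t * ∑ i, z (w i))) := by ring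
  have step2 : ∑ w : Fin n → 𝒳, wp p w * Real.exp (t * ∑ i, z (w i))
      = (∑ a, p a * Real.exp (t * z a)) ^ n := by
    rw [← sum_prod_fn (fun a => p a * Real.exp (t * z a)) n]
    refine Finset.sum_congr rfl fun w _ => ?_
    rw [wp, Finset.mul_sum, Real.exp_sum, ← Finset.prod_mul_distrib]
  have hmgf : ∑ a, p a * Real.exp (t * z a) ≤ Real.exp (t ^ 2 * B ^ 2) :=
    mgf_bound p z hp0 hp1 hzm B t hzB ht0.le (by
      have h : t ≤ 1 / B := min_le_left _ _
      calc t * B ≤ (1/B) * B := mul_le_mul_of_nonneg_right h hB.le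
        _ = 1 := by field_simp)
  have hmgf0 : 0 ≤ ∑ a, p a * Real.exp (t * z a) :=
    Finset.sum_nonneg fun a _ => mul_nonneg (hp0 a) (Real.exp_pos _).le
  calc ∑ w ∈ Finset.univ.filter (fun w : Fin n → 𝒳 => u < ∑ i, z (w i)), wp p w
      ≤ Real.exp (-(t * u)) * (∑ a, p a * Real.exp (t * z a)) ^ n := by
        rw [← step2]; exact step1
    _ ≤ Real.exp (-(t * u)) * Real.exp (t ^ 2 * B ^ 2) ^ n :=
        mul_le_mul_of_nonneg_left (pow_le_pow_left₀ hmgf0 hmgf n) (Real.exp_pos _).le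
    _ = Real.exp (-(t * u) + n * (t ^ 2 * B ^ 2)) := by
        rw [← Real.exp_nat_mul, ← Real.exp_add]
    _ ≤ Real.exp (-(t * θ) / 2) ^ n := by
        rw [← Real.exp_nat_mul]
        apply Real.exp_le_exp.mpr
        have h1 : t * (θ * n) ≤ t * u := mul_le_mul_of_nonneg_left hu ht0.le
        have h2 : t ≤ θ / (2 * B ^ 2) := min_le_right _ _
        have h3 : t ^ 2 * B ^ 2 ≤ t * θ / 2 := by
          have h5 : t * B ^ 2 ≤ θ / 2 := by
            calc t * B ^ 2 ≤ (θ / (2 * B ^ 2)) * B ^ 2 :=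
              mul_le_mul_of_nonneg_right h2 (by positivity)
              _ = θ / 2 := by field_simp
          calc t ^ 2 * B ^ 2 = t * (t * B ^ 2) := by ring
            _ ≤ t * (θ / 2) := mul_le_mul_of_nonneg_left h5 ht0.le
            _ = t * θ / 2 := by ring
        nlinarith

lemma two_rpow_sum {ι : Type*} (s : Finset ι) (f : ι → ℝ) :
    (2:ℝ) ^ (∑ i ∈ s, f i) = ∏ i ∈ s, (2:ℝ) ^ (f i) := by
  simp only [Real.rpow_def_of_pos (by norm_num : (0:ℝ) < 2)]
  rw [Finset.mul_sum, Real.exp_sum]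

lemma lin_exp_decay (A B a : ℝ) (ha : 0 < a) :
    Tendsto (fun c : ℝ => (A + B * c) * Real.exp (-(a * c))) atTop (𝓝 0) := by
  have h1 : Tendsto (fun c : ℝ => a * c) atTop atTop :=
    Tendsto.const_mul_atTop ha tendsto_id
  have hexp : Tendsto (fun c : ℝ => Real.exp (-(a * c))) atTop (𝓝 0) :=
    (Real.tendsto_exp_neg_atTop_nhds_zero).comp h1
  have hxexp : Tendsto (fun c : ℝ => (a * c) * Real.exp (-(a * c))) atTop (𝓝 0) := by
    have := (Real.tendsto_pow_mul_exp_neg_atTop_nhds_zero 1).comp h1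
    simpa [Function.comp_def] using this
  have h2 : Tendsto (fun c : ℝ => A * Real.exp (-(a*c)) + (B/a) * ((a*c) * Real.exp (-(a*c))))
      atTop (𝓝 (A * 0 + (B/a) * 0)) :=
    (hexp.const_mul A).add (hxexp.const_mul (B/a))
  simp only [mul_zero, add_zero] at h2
  refine h2.congr fun c => ?_
  field_simp

lemma pointwise_le (N : (ℕ → 𝒳) → ℕ∞) (m : ℕ) (t : ℕ → Set (ℕ → 𝒳))
    (ht : ∀ n : ℕ, {x | ((n : ℕ) : ℕ∞) < N x} ⊆ t n) (x : ℕ → 𝒳) :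
    (N x : ℝ≥0∞) ≤ (m : ℝ≥0∞) + ∑' k : ℕ, (t (m + k)).indicator (fun _ => (1:ℝ≥0∞)) x := by
  have hstep : ∀ k : ℕ, (if ((m+k : ℕ) : ℕ∞) < N x then (1:ℝ≥0∞) else 0)
      ≤ (t (m + k)).indicator (fun _ => (1:ℝ≥0∞)) x := by
    intro k
    by_cases h : ((m+k : ℕ) : ℕ∞) < N x
    · rw [if_pos h, Set.indicator_of_mem (ht (m+k) h)]
    · rw [if_neg h]; exact zero_le
  refine le_trans ?_ (add_le_add_right (ENNReal.tsum_le_tsum hstep) _)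
  cases hN : N x with
  | top =>
    have heq : (fun k : ℕ => if ((m+k : ℕ) : ℕ∞) < (⊤ : ℕ∞) then (1:ℝ≥0∞) else 0)
        = fun _ => (1:ℝ≥0∞) := by
      funext k
      rw [if_pos (ENat.coe_lt_top _)]
    rw [heq, ENNReal.tsum_const_eq_top_of_ne_zero one_ne_zero]
    simp
  | coe j =>
    by_cases hj : j ≤ m
    · calc ((j : ℕ∞) : ℝ≥0∞) = (j : ℝ≥0∞) := ENat.toENNReal_coe j
        _ ≤ (m : ℝ≥0∞) := by exact_mod_cast hj
        _ ≤ _ := le_self_add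
    · push_neg at hj
      set d := j - m with hd
      have hcond : ∀ k ∈ Finset.range d, ((m+k:ℕ):ℕ∞) < (j:ℕ∞) := by
        intro k hk
        have hk' := Finset.mem_range.mp hk
        exact_mod_cast (by omega : m + k < j)
      have hsum : (∑ k ∈ Finset.range d,
          if ((m+k : ℕ) : ℕ∞) < (j : ℕ∞) then (1:ℝ≥0∞) else 0) = d := by
        rw [Finset.sum_congr rfl (fun k hk => if_pos (hcond k hk))]
        simp
      calc ((j:ℕ∞):ℝ≥0∞) = (j:ℝ≥0∞) := ENat.toENNReal_coe j
        _ = (m:ℝ≥0∞) + (d:ℝ≥0∞) := by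
            have hjd : j = m + d := by omega
            rw [hjd]
            push_cast
            ring
        _ ≤ (m:ℝ≥0∞) + ∑' k : ℕ, (if ((m+k : ℕ) : ℕ∞) < (j : ℕ∞) then (1:ℝ≥0∞) else 0) :=
            add_le_add_right (hsum ▸ ENNReal.sum_le_tsum (Finset.range d)) _

lemma lexp_le (P : Measure (ℕ → 𝒳)) [IsProbabilityMeasure P] (N : (ℕ → 𝒳) → ℕ∞) (m : ℕ)
    (bound : ℕ → ℝ≥0∞) (hb : ∀ k : ℕ, P {x | ((m+k : ℕ) : ℕ∞) < N x} ≤ bound k) :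
    lexp P N ≤ (m : ℝ≥0∞) + ∑' k : ℕ, bound k := by
  choose t hsub hmeas hmeq using fun n : ℕ => exists_measurable_superset P {x | ((n:ℕ):ℕ∞) < N x}
  calc lexp P N ≤ ∫⁻ x, ((m : ℝ≥0∞) + ∑' k : ℕ, (t (m + k)).indicator (fun _ => (1:ℝ≥0∞)) x) ∂P :=
        lintegral_mono (pointwise_le N m t hsub)
    _ = (m : ℝ≥0∞) + ∑' k : ℕ, P (t (m + k)) := by
        rw [lintegral_add_left measurable_const]
        rw [lintegral_const, measure_univ, mul_one]
        congr 1
        rw [lintegral_tsum (fun k => (measurable_const.indicator (hmeas (m+k))).aemeasurable)]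
        exact tsum_congr fun k => lintegral_indicator_one (hmeas (m+k))
    _ ≤ (m : ℝ≥0∞) + ∑' k : ℕ, bound k := by
        refine add_le_add_right (ENNReal.tsum_le_tsum fun k => ?_) _
        rw [hmeq (m+k)]
        exact hb k

lemma lexp_ge (P : Measure (ℕ → 𝒳)) [IsProbabilityMeasure P] (N : (ℕ → 𝒳) → ℕ∞) (m : ℕ) :
    (m : ℝ≥0∞) * (1 - P {x | N x < ((m:ℕ) : ℕ∞)}) ≤ lexp P N := by
  obtain ⟨t, hsub, hmeas, hmeq⟩ := exists_measurable_superset P {x | N x < ((m:ℕ):ℕ∞)}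
  have hpt : ∀ x, (tᶜ).indicator (fun _ => (m:ℝ≥0∞)) x ≤ (N x : ℝ≥0∞) := by
    intro x
    by_cases hx : x ∈ tᶜ
    · rw [Set.indicator_of_mem hx]
      have hnlt : ¬ N x < ((m:ℕ):ℕ∞) := fun hlt => hx (hsub hlt)
      have hle : ((m:ℕ):ℕ∞) ≤ N x := not_lt.mp hnlt
      calc (m:ℝ≥0∞) = (((m:ℕ):ℕ∞) : ℝ≥0∞) := (ENat.toENNReal_coe m).symm
        _ ≤ (N x : ℝ≥0∞) := ENat.toENNReal_le.mpr hle
    · rw [Set.indicator_of_notMem hx]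
      exact zero_le
  calc (m : ℝ≥0∞) * (1 - P {x | N x < ((m:ℕ):ℕ∞)})
      = (m : ℝ≥0∞) * P tᶜ := by rw [prob_compl_eq_one_sub hmeas, hmeq]
    _ = ∫⁻ x, (tᶜ).indicator (fun _ => (m:ℝ≥0∞)) x ∂P := (lintegral_indicator_const hmeas.compl _).symm
    _ ≤ lexp P N := lintegral_mono hpt

noncomputable def zeta (μ1 ν : 𝒳 → ℝ) (a : 𝒳) : ℝ :=
  Real.logb 2 (μ1 a) - Real.logb 2 (ν a)

lemma D_eq_sum_zeta (μ1 ν : 𝒳 → ℝ) (hμ1 : IsPosPMF μ1) (hν : IsPosPMF ν) :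
    D μ1 ν = ∑ a, μ1 a * zeta μ1 ν a := by
  refine Finset.sum_congr rfl fun a _ => ?_
  rw [zeta, Real.logb_div (ne_of_gt (hμ1.1 a)) (ne_of_gt (hν.1 a))]

lemma wp_pos {p : 𝒳 → ℝ} (hp : ∀ a, 0 < p a) {n : ℕ} (w : Fin n → 𝒳) :
    0 < wp p w := Finset.prod_pos fun i _ => hp _

lemma logb_wp {p : 𝒳 → ℝ} (hp : ∀ a, 0 < p a) {n : ℕ} (w : Fin n → 𝒳) :
    Real.logb 2 (wp p w) = ∑ i, Real.logb 2 (p (w i)) :=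
  Real.logb_prod _ _ fun i _ => ne_of_gt (hp _)

lemma two_rpow_zeta {μ1 ν : 𝒳 → ℝ} (hμ1 : ∀ a, 0 < μ1 a) (hν : ∀ a, 0 < ν a) (a : 𝒳) :
    (2:ℝ) ^ (zeta μ1 ν a) = μ1 a / ν a := by
  rw [zeta, Real.rpow_sub (by norm_num : (0:ℝ) < 2),
    Real.rpow_logb (by norm_num) (by norm_num) (hμ1 a),
    Real.rpow_logb (by norm_num) (by norm_num) (hν a)]

lemma stat_lb {μ1 ν : 𝒳 → ℝ} (hμ1 : IsPosPMF μ1) (hν : IsPosPMF ν)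
    {L : (n : ℕ) → (Fin n → 𝒳) → ℕ} {R : ℕ → ℝ}
    (hRb : ∀ (n : ℕ) (μ : 𝒳 → ℝ), IsPosPMF μ → ∀ w : Fin n → 𝒳,
      (L n w : ℝ) + Real.logb 2 (wp μ w) ≤ R n)
    (lam : ℝ) (x : ℕ → 𝒳) (n : ℕ) :
    (∑ i, zeta μ1 ν (seg x 0 n i)) - R n - n * lam ≤ stat L ν lam 0 x n := by
  have h1 := hRb n μ1 hμ1 (seg x 0 n)
  have h2 : -(L n (seg x 0 n) : ℝ) ≥ Real.logb 2 (wp μ1 (seg x 0 n)) - R n := by linarith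
  have h3 : Real.logb 2 (wp μ1 (seg x 0 n)) - Real.logb 2 (wp ν (seg x 0 n))
      = ∑ i, zeta μ1 ν (seg x 0 n i) := by
    rw [logb_wp hμ1.1, logb_wp hν.1, ← Finset.sum_sub_distrib]
    simp [zeta]
  rw [stat]
  linarith [h3]

lemma stat_ub {ν : 𝒳 → ℝ} (hν : IsPosPMF ν)
    {L : (n : ℕ) → (Fin n → 𝒳) → ℕ} {lam : ℝ} (hlam : 0 < lam)
    (x : ℕ → 𝒳) (n : ℕ) :
    stat L ν lam 0 x n ≤ n * ((∑ a, |Real.logb 2 (ν a)|) + 1) := by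
  set B₂ := (∑ a, |Real.logb 2 (ν a)|) + 1 with hB₂
  have hbd : ∀ a, -Real.logb 2 (ν a) ≤ B₂ := by
    intro a
    have h1 : |Real.logb 2 (ν a)| ≤ ∑ b, |Real.logb 2 (ν b)| :=
      Finset.single_le_sum (f := fun b => |Real.logb 2 (ν b)|)
        (fun b _ => abs_nonneg _) (Finset.mem_univ a)
    have := neg_abs_le (Real.logb 2 (ν a))
    rw [hB₂]
    linarith
  have h2 : -Real.logb 2 (wp ν (seg x 0 n)) = ∑ i, -Real.logb 2 (ν (seg x 0 n i)) := by
    rw [logb_wp hν.1]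
    rw [Finset.sum_neg_distrib]
  have h3 : ∑ i : Fin n, -Real.logb 2 (ν (seg x 0 n i)) ≤ ∑ _i : Fin n, B₂ :=
    Finset.sum_le_sum fun i _ => hbd _
  have h4 : ∑ _i : Fin n, B₂ = n * B₂ := by
    rw [Finset.sum_const, Finset.card_univ, Fintype.card_fin, nsmul_eq_mul]
  have h5 : (0:ℝ) ≤ (L n (seg x 0 n) : ℝ) := Nat.cast_nonneg _
  have h6 : (0:ℝ) ≤ n * lam := by positivity
  have h7 : -Real.logb 2 (wp ν (seg x 0 n)) ≤ n * B₂ := by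
    rw [h2]
    calc ∑ i : Fin n, -Real.logb 2 (ν (seg x 0 n i)) ≤ ∑ _i : Fin n, B₂ := h3
      _ = n * B₂ := h4
  rw [stat]
  linarith

lemma kraft_typ {μ1 ν : 𝒳 → ℝ} (hμ1 : IsPosPMF μ1) (hν : IsPosPMF ν)
    {L : (n : ℕ) → (Fin n → 𝒳) → ℕ} (hL : Kraft L) (lam : ℝ)
    (n : ℕ) (c θ : ℝ) :
    ∑ w ∈ Finset.univ.filter (fun w : Fin n → 𝒳 =>
        (c ≤ -(L n w : ℝ) - Real.logb 2 (wp ν w) - n * lam) ∧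
        (∑ i, (zeta μ1 ν (w i) - D μ1 ν) ≤ θ * n)), wp μ1 w
      ≤ (2:ℝ) ^ (n * (D μ1 ν - lam + θ) - c) := by
  set Dv := D μ1 ν with hDv
  have key : ∀ w ∈ Finset.univ.filter (fun w : Fin n → 𝒳 =>
      (c ≤ -(L n w : ℝ) - Real.logb 2 (wp ν w) - n * lam) ∧
      (∑ i, (zeta μ1 ν (w i) - Dv) ≤ θ * n)),
      wp μ1 w ≤ (2:ℝ) ^ (n * (Dv + θ) - c - n * lam) * (2:ℝ) ^ (-(L n w : ℝ)) := by
    intro w hw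
    obtain ⟨hc, hty⟩ := (Finset.mem_filter.mp hw).2
    have hν_pos := wp_pos hν.1 w
    have h1 : Real.logb 2 (wp ν w) ≤ -c - n * lam - (L n w : ℝ) := by linarith
    have h2 : wp ν w ≤ (2:ℝ) ^ (-c - n * lam - (L n w : ℝ)) := by
      calc wp ν w = (2:ℝ) ^ (Real.logb 2 (wp ν w)) :=
            (Real.rpow_logb (by norm_num) (by norm_num) hν_pos).symm
        _ ≤ _ := Real.rpow_le_rpow_of_exponent_le one_le_two h1
    have h3 : wp μ1 w = wp ν w * (2:ℝ) ^ (∑ i, zeta μ1 ν (w i)) := by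
      rw [two_rpow_sum, wp, wp, ← Finset.prod_mul_distrib]
      refine Finset.prod_congr rfl fun i _ => ?_
      rw [two_rpow_zeta hμ1.1 hν.1, mul_comm, div_mul_cancel₀ _ (ne_of_gt (hν.1 _))]
    have h4 : ∑ i, zeta μ1 ν (w i) ≤ n * (Dv + θ) := by
      have hty2 : ∑ i, (zeta μ1 ν (w i) - Dv) = (∑ i, zeta μ1 ν (w i)) - n * Dv := by
        rw [Finset.sum_sub_distrib, Finset.sum_const, Finset.card_univ, Fintype.card_fin,
          nsmul_eq_mul]
      rw [hty2] at hty
      linarith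
    calc wp μ1 w = wp ν w * (2:ℝ) ^ (∑ i, zeta μ1 ν (w i)) := h3
      _ ≤ (2:ℝ) ^ (-c - n * lam - (L n w : ℝ)) * (2:ℝ) ^ (n * (Dv + θ)) := by
          refine mul_le_mul h2 (Real.rpow_le_rpow_of_exponent_le one_le_two h4)
            (Real.rpow_nonneg (by norm_num) _) (Real.rpow_nonneg (by norm_num) _)
      _ = (2:ℝ) ^ (n * (Dv + θ) - c - n * lam) * (2:ℝ) ^ (-(L n w : ℝ)) := by
          rw [← Real.rpow_add (by norm_num : (0:ℝ) < 2), ← Real.rpow_add (by norm_num : (0:ℝ) < 2)]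
          ring_nf
  calc ∑ w ∈ Finset.univ.filter _, wp μ1 w
      ≤ ∑ w ∈ Finset.univ.filter (fun w : Fin n → 𝒳 =>
          (c ≤ -(L n w : ℝ) - Real.logb 2 (wp ν w) - n * lam) ∧
          (∑ i, (zeta μ1 ν (w i) - Dv) ≤ θ * n)),
          (2:ℝ) ^ (n * (Dv + θ) - c - n * lam) * (2:ℝ) ^ (-(L n w : ℝ)) :=
        Finset.sum_le_sum key
    _ ≤ ∑ w : Fin n → 𝒳, (2:ℝ) ^ (n * (Dv + θ) - c - n * lam) * (2:ℝ) ^ (-(L n w : ℝ)) :=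
        Finset.sum_le_sum_of_subset_of_nonneg (Finset.filter_subset _ _)
          (fun w _ _ => mul_nonneg (Real.rpow_nonneg (by norm_num) _)
            (Real.rpow_nonneg (by norm_num) _))
    _ = (2:ℝ) ^ (n * (Dv + θ) - c - n * lam) * ∑ w : Fin n → 𝒳, (2:ℝ) ^ (-(L n w : ℝ)) := by
        rw [Finset.mul_sum]
    _ ≤ (2:ℝ) ^ (n * (Dv + θ) - c - n * lam) * 1 :=
        mul_le_mul_of_nonneg_left (hL n) (Real.rpow_nonneg (by norm_num) _)
    _ = (2:ℝ) ^ (n * (Dv - lam + θ) - c) := by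
        rw [mul_one]
        congr 1
        ring

-- main lemma
lemma main_tendsto (μ1 ν : 𝒳 → ℝ) (hμ1 : IsPosPMF μ1) (hν : IsPosPMF ν)
    (L : (n : ℕ) → (Fin n → 𝒳) → ℕ) (hL : Kraft L) (hU : StronglyUniversal L)
    (lam : ℝ) (hlam0 : 0 < lam) (hlam1 : lam < D μ1 ν)
    (P1 : Measure (ℕ → 𝒳)) (hP1 : IsIIDLaw μ1 P1) :
    Tendsto (fun c : ℝ => (lexp P1 (Nc L ν lam c)).toReal * (D μ1 ν - lam) / |c|)
      atTop (𝓝 1) := by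
  obtain ⟨R, hRo, hRb⟩ := hU
  have hPP : IsProbabilityMeasure P1 := hP1.1
  have hμpos : ∀ a, 0 < μ1 a := hμ1.1
  have hμ0 : ∀ a, 0 ≤ μ1 a := fun a => (hμpos a).le
  have hD' : 0 < D μ1 ν - lam := sub_pos.mpr hlam1
  have hDsum : ∑ a, μ1 a * zeta μ1 ν a = D μ1 ν := (D_eq_sum_zeta μ1 ν hμ1 hν).symm
  set B : ℝ := (∑ a, |zeta μ1 ν a - D μ1 ν|) + 1 with hBdef
  have hBpos : 0 < B :=
    add_pos_of_nonneg_of_pos (Finset.sum_nonneg fun a _ => abs_nonneg _) one_pos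
  have hBbd : ∀ a, |zeta μ1 ν a - D μ1 ν| ≤ B := by
    intro a
    have h1 := Finset.single_le_sum (f := fun b => |zeta μ1 ν b - D μ1 ν|)
      (fun b _ => abs_nonneg _) (Finset.mem_univ a)
    rw [hBdef]
    linarith
  have hBbd' : ∀ a, |D μ1 ν - zeta μ1 ν a| ≤ B := fun a => by rw [abs_sub_comm]; exact hBbd a
  set B₂ : ℝ := (∑ a, |Real.logb 2 (ν a)|) + 1 with hB₂def
  have hB₂pos : 0 < B₂ :=
    add_pos_of_nonneg_of_pos (Finset.sum_nonneg fun a _ => abs_nonneg _) one_pos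
  have hmean : ∑ a, μ1 a * (zeta μ1 ν a - D μ1 ν) = 0 := by
    have h1 : ∑ a, μ1 a * (zeta μ1 ν a - D μ1 ν)
        = (∑ a, μ1 a * zeta μ1 ν a) - (∑ a, μ1 a) * D μ1 ν := by
      rw [Finset.sum_mul, ← Finset.sum_sub_distrib]
      exact Finset.sum_congr rfl fun a _ => by ring
    rw [h1, hDsum, hμ1.2, one_mul, sub_self]
  have hmean' : ∑ a, μ1 a * (D μ1 ν - zeta μ1 ν a) = 0 := by
    have h1 : ∀ a:𝒳, μ1 a * (D μ1 ν - zeta μ1 ν a)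
        = -(μ1 a * (zeta μ1 ν a - D μ1 ν)) := fun a => by ring
    simp only [h1, Finset.sum_neg_distrib, hmean, neg_zero]
  rw [Metric.tendsto_nhds]
  intro ε hε
  set e := min ε 1 / 8 with hedef
  have he0 : 0 < e := by
    rw [hedef]
    have : 0 < min ε 1 := lt_min hε one_pos
    linarith
  have he18 : e ≤ 1/8 := by
    rw [hedef]
    have : min ε 1 ≤ 1 := min_le_right _ _
    linarith
  have heε : 8 * e ≤ ε := by
    rw [hedef]
    have : min ε 1 ≤ ε := min_le_left _ _
    linarith
  have h2e : 0 < 1 - 2*e := by linarith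
  have hpos12 : 0 < (D μ1 ν - lam) * (1 - 2*e) := mul_pos hD' h2e
  obtain ⟨ρ₁, hρ₁0, hρ₁1, hdev₁⟩ := dev_bound μ1 (fun a => D μ1 ν - zeta μ1 ν a) hμ0 hμ1.2
    hmean' B (e * (D μ1 ν - lam)) hBpos (by positivity) hBbd'
  obtain ⟨ρ₂, hρ₂0, hρ₂1, hdev₂⟩ := dev_bound μ1 (fun a => zeta μ1 ν a - D μ1 ν) hμ0 hμ1.2
    hmean B (e * (D μ1 ν - lam) / 2) hBpos (by positivity) hBbd
  obtain ⟨n₀, hn₀⟩ := Metric.tendsto_atTop.mp hRo (e * (D μ1 ν - lam)) (by positivity)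
  set n₁ := max n₀ 1 with hn₁def
  have hRle : ∀ n : ℕ, n₁ ≤ n → R n ≤ e * (D μ1 ν - lam) * n := by
    intro n hn
    have h1 := hn₀ n (le_trans (le_max_left _ _) hn)
    have hn1 : (1:ℝ) ≤ (n:ℝ) := by exact_mod_cast le_trans (le_max_right n₀ 1) hn
    have hnpos : (0:ℝ) < n := by linarith
    rw [dist_zero_right, Real.norm_eq_abs] at h1
    have h2 : R n / n < e * (D μ1 ν - lam) := lt_of_le_of_lt (le_abs_self _) h1
    have h3 : R n < e * (D μ1 ν - lam) * n := by
      rw [div_lt_iff₀ hnpos] at h2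
      linarith
    linarith
  set K₁ : ℝ := (1 - ρ₁)⁻¹ with hK₁def
  have hK₁pos : 0 < K₁ := by
    rw [hK₁def]
    exact inv_pos.mpr (by linarith)
  -- ============ upper bound ============
  have upper : ∀ᶠ c in atTop, lexp P1 (Nc L ν lam c)
      ≤ ENNReal.ofReal ((((n₁:ℝ) + 2 + K₁) + c / ((D μ1 ν - lam) * (1 - 2*e)))) := by
    filter_upwards [eventually_ge_atTop (0:ℝ)] with c hc
    set m := n₁ + 1 + ⌈c / ((D μ1 ν - lam) * (1 - 2*e))⌉₊ with hmdef
    have htail : ∀ k : ℕ, P1 {x | ((m + k : ℕ) : ℕ∞) < Nc L ν lam c x}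
        ≤ ENNReal.ofReal (ρ₁ ^ (m + k)) := by
      intro k
      set n := m + k with hndef
      have hn1 : 1 ≤ n := by omega
      have hnn₁ : n₁ ≤ n := by omega
      have hnc : c ≤ (n:ℝ) * ((D μ1 ν - lam) * (1 - 2*e)) := by
        have h1 : c / ((D μ1 ν - lam) * (1 - 2*e))
            ≤ (⌈c / ((D μ1 ν - lam) * (1 - 2*e))⌉₊ : ℝ) := Nat.le_ceil _
        have h2 : ((⌈c / ((D μ1 ν - lam) * (1 - 2*e))⌉₊ : ℕ) : ℝ) ≤ (n:ℝ) := by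
          have h3 : ⌈c / ((D μ1 ν - lam) * (1 - 2*e))⌉₊ ≤ n := by omega
          exact_mod_cast h3
        calc c = (c / ((D μ1 ν - lam) * (1-2*e))) * ((D μ1 ν - lam) * (1-2*e)) := by
              field_simp
          _ ≤ (n:ℝ) * ((D μ1 ν - lam) * (1-2*e)) :=
              mul_le_mul_of_nonneg_right (h1.trans h2) hpos12.le
      have hsub : {x | ((n:ℕ):ℕ∞) < Nc L ν lam c x}
          ⊆ {x | (e * (D μ1 ν - lam)) * (n:ℝ) < ∑ i, (D μ1 ν - zeta μ1 ν (seg x 0 n i))} := by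
        intro x hx
        simp only [Set.mem_setOf_eq] at hx ⊢
        have hnle : ¬ (Nc L ν lam c x ≤ (n:ℕ∞)) := not_le.mpr hx
        have hstat : stat L ν lam 0 x n < c := by
          by_contra hcon
          exact hnle (Nc_le_iff.mpr ⟨n, hn1, le_refl n, not_lt.mp hcon⟩)
        have hlb := stat_lb hμ1 hν hRb lam x n
        have hζsum : ∑ i, zeta μ1 ν (seg x 0 n i) < c + R n + n * lam := by linarith
        have hRn := hRle n hnn₁
        have hsplit : ∑ i, (D μ1 ν - zeta μ1 ν (seg x 0 n i))
            = (n:ℝ) * D μ1 ν - ∑ i, zeta μ1 ν (seg x 0 n i) := by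
          rw [Finset.sum_sub_distrib, Finset.sum_const, Finset.card_univ, Fintype.card_fin,
            nsmul_eq_mul]
        rw [hsplit]
        nlinarith
      calc P1 {x | ((m + k : ℕ) : ℕ∞) < Nc L ν lam c x}
          ≤ P1 {x | (e * (D μ1 ν - lam)) * (n:ℝ)
              < ∑ i, (D μ1 ν - zeta μ1 ν (seg x 0 n i))} := measure_mono hsub
        _ ≤ ENNReal.ofReal (∑ w ∈ Finset.univ.filter
              (fun w : Fin n → 𝒳 => (e * (D μ1 ν - lam)) * (n:ℝ)
                < ∑ i, (D μ1 ν - zeta μ1 ν (w i))), wp μ1 w) :=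
            event_bound hP1 hμ0 n _
        _ ≤ ENNReal.ofReal (ρ₁ ^ n) :=
            ENNReal.ofReal_le_ofReal (hdev₁ n ((e * (D μ1 ν - lam)) * (n:ℝ)) le_rfl)
    have hlexp := lexp_le P1 (Nc L ν lam c) m (fun k => ENNReal.ofReal (ρ₁ ^ (m + k))) htail
    have hgeo : ∑' k : ℕ, ENNReal.ofReal (ρ₁ ^ (m + k)) ≤ ENNReal.ofReal K₁ := by
      calc ∑' k : ℕ, ENNReal.ofReal (ρ₁ ^ (m + k))
          ≤ ∑' k : ℕ, ENNReal.ofReal (ρ₁ ^ k) :=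
            ENNReal.tsum_le_tsum fun k => ENNReal.ofReal_le_ofReal
              (pow_le_pow_of_le_one hρ₁0.le hρ₁1.le (by omega))
        _ = ENNReal.ofReal (∑' k : ℕ, ρ₁ ^ k) :=
            (ENNReal.ofReal_tsum_of_nonneg (fun k => pow_nonneg hρ₁0.le k)
              (summable_geometric_of_lt_one hρ₁0.le hρ₁1)).symm
        _ = ENNReal.ofReal K₁ := by rw [tsum_geometric_of_lt_one hρ₁0.le hρ₁1]
    have hm : (m:ℝ) ≤ (n₁:ℝ) + 2 + c / ((D μ1 ν - lam) * (1 - 2*e)) := by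
      have h1 : (⌈c / ((D μ1 ν - lam) * (1 - 2*e))⌉₊ : ℝ)
          < c / ((D μ1 ν - lam) * (1 - 2*e)) + 1 := Nat.ceil_lt_add_one (by positivity)
      have h2 : (m:ℝ) = (n₁:ℝ) + 1 + (⌈c / ((D μ1 ν - lam) * (1 - 2*e))⌉₊ : ℝ) := by
        rw [hmdef]; push_cast; ring
      linarith
    calc lexp P1 (Nc L ν lam c) ≤ (m : ℝ≥0∞) + ∑' k : ℕ, ENNReal.ofReal (ρ₁ ^ (m + k)) := hlexp
      _ ≤ (m : ℝ≥0∞) + ENNReal.ofReal K₁ := add_le_add_right hgeo _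
      _ = ENNReal.ofReal ((m:ℝ) + K₁) := by
          rw [ENNReal.ofReal_add (by positivity) hK₁pos.le, ENNReal.ofReal_natCast]
      _ ≤ ENNReal.ofReal ((((n₁:ℝ) + 2 + K₁) + c / ((D μ1 ν - lam) * (1 - 2*e)))) :=
          ENNReal.ofReal_le_ofReal (by linarith)
  -- ============ lower bound ============
  set a₁ : ℝ := e/2 * Real.log 2 with ha₁def
  have ha₁ : 0 < a₁ := mul_pos (by positivity) (Real.log_pos one_lt_two)
  set a₂ : ℝ := (-Real.log ρ₂) / B₂ with ha₂def
  have ha₂ : 0 < a₂ := div_pos (neg_pos.mpr (Real.log_neg hρ₂0 hρ₂1)) hB₂pos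
  have hδ : Tendsto (fun c : ℝ => (1 + (1/(D μ1 ν - lam)) * c) * Real.exp (-(a₁ * c))
      + (1 + (1/(D μ1 ν - lam)) * c) * Real.exp (-(a₂ * c))) atTop (𝓝 0) := by
    have h1 := (lin_exp_decay 1 (1/(D μ1 ν - lam)) a₁ ha₁).add
      (lin_exp_decay 1 (1/(D μ1 ν - lam)) a₂ ha₂)
    simpa using h1
  have hδe : ∀ᶠ c in atTop, (1 + (1/(D μ1 ν - lam)) * c) * Real.exp (-(a₁ * c))
      + (1 + (1/(D μ1 ν - lam)) * c) * Real.exp (-(a₂ * c)) < e := hδ.eventually (gt_mem_nhds he0)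
  have lower : ∀ᶠ c in atTop,
      P1 {x | Nc L ν lam c x < ((⌊(1 - e) * c / (D μ1 ν - lam)⌋₊ : ℕ) : ℕ∞)}
        ≤ ENNReal.ofReal e := by
    filter_upwards [eventually_ge_atTop (1:ℝ), hδe] with c hc hδc
    have hc0 : (0:ℝ) < c := by linarith
    set m := ⌊(1 - e) * c / (D μ1 ν - lam)⌋₊ with hmdef
    have hmle : (m:ℝ) ≤ (1-e) * c / (D μ1 ν - lam) :=
      Nat.floor_le (div_nonneg (mul_nonneg (by linarith) hc0.le) hD'.le)
    have hmD : (m:ℝ) * (D μ1 ν - lam) ≤ (1-e) * c := by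
      rw [← le_div_iff₀ hD']
      exact hmle
    -- union bound over 1 ≤ n ≤ m
    have hsub : {x | Nc L ν lam c x < ((m:ℕ):ℕ∞)}
        ⊆ ⋃ n ∈ Finset.Icc 1 m, {x | c ≤ stat L ν lam 0 x n} := by
      intro x hx
      have hle : Nc L ν lam c x ≤ (m:ℕ∞) := le_of_lt hx
      obtain ⟨k, hk1, hkm, hstat⟩ := Nc_le_iff.mp hle
      simp only [Set.mem_iUnion, exists_prop]
      exact ⟨k, Finset.mem_Icc.mpr ⟨hk1, hkm⟩, hstat⟩
    have hband : ∀ n ∈ Finset.Icc 1 m, P1 {x | c ≤ stat L ν lam 0 x n}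
        ≤ ENNReal.ofReal ((2:ℝ)^(-(e/2)*c) + ρ₂ ^ (c/B₂)) := by
      intro n hn
      obtain ⟨hn1, hnm⟩ := Finset.mem_Icc.mp hn
      by_cases hcB : c ≤ (n:ℝ) * B₂
      · -- main case : event bound + kraft typ + dev bound
        have hstep : P1 {x | c ≤ stat L ν lam 0 x n}
            ≤ ENNReal.ofReal (∑ w ∈ Finset.univ.filter
              (fun w : Fin n → 𝒳 =>
                c ≤ -(L n w : ℝ) - Real.logb 2 (wp ν w) - n * lam), wp μ1 w) :=
          event_bound hP1 hμ0 n _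
        have hsplit : ∑ w ∈ Finset.univ.filter
              (fun w : Fin n → 𝒳 =>
                c ≤ -(L n w : ℝ) - Real.logb 2 (wp ν w) - n * lam), wp μ1 w
            ≤ (∑ w ∈ Finset.univ.filter (fun w : Fin n → 𝒳 =>
                (c ≤ -(L n w : ℝ) - Real.logb 2 (wp ν w) - n * lam) ∧
                (∑ i, (zeta μ1 ν (w i) - D μ1 ν) ≤ (e * (D μ1 ν - lam) / 2) * n)), wp μ1 w)
              + ∑ w ∈ Finset.univ.filter (fun w : Fin n → 𝒳 =>
                (e * (D μ1 ν - lam) / 2) * (n:ℝ) < ∑ i, (zeta μ1 ν (w i) - D μ1 ν)), wp μ1 w := by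
          rw [← Finset.sum_filter_add_sum_filter_not
            (Finset.univ.filter (fun w : Fin n → 𝒳 =>
              c ≤ -(L n w : ℝ) - Real.logb 2 (wp ν w) - n * lam))
            (fun w : Fin n → 𝒳 =>
              ∑ i, (zeta μ1 ν (w i) - D μ1 ν) ≤ (e * (D μ1 ν - lam) / 2) * n)
            (wp μ1)]
          refine add_le_add ?_ ?_
          · rw [Finset.filter_filter]
          · refine Finset.sum_le_sum_of_subset_of_nonneg ?_ (fun w _ _ => wp_nonneg hμ0 w)
            intro w hw
            rw [Finset.mem_filter] at hw ⊢
            rw [Finset.mem_filter] at hw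
            exact ⟨Finset.mem_univ _, not_le.mp hw.2⟩
        have hk := kraft_typ hμ1 hν hL lam n c (e * (D μ1 ν - lam) / 2)
        have hd := hdev₂ n ((e * (D μ1 ν - lam) / 2) * (n:ℝ)) le_rfl
        -- exponent bound for the kraft term
        have hexp : (2:ℝ) ^ ((n:ℝ) * (D μ1 ν - lam + e * (D μ1 ν - lam) / 2) - c)
            ≤ (2:ℝ) ^ (-(e/2)*c) := by
          apply Real.rpow_le_rpow_of_exponent_le one_le_two
          have hnm' : (n:ℝ) ≤ (m:ℝ) := by exact_mod_cast hnm
          have hnD : (n:ℝ) * (D μ1 ν - lam) ≤ (1-e) * c := by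
            calc (n:ℝ) * (D μ1 ν - lam) ≤ (m:ℝ) * (D μ1 ν - lam) :=
                  mul_le_mul_of_nonneg_right hnm' hD'.le
              _ ≤ (1-e) * c := hmD
          nlinarith [mul_le_mul_of_nonneg_right hnD (by positivity : (0:ℝ) ≤ 1 + e/2),
            mul_nonneg (mul_nonneg he0.le he0.le) hc0.le]
        -- rho2 tail bound
        have hρn : ρ₂ ^ n ≤ ρ₂ ^ (c / B₂) := by
          rw [← Real.rpow_natCast ρ₂ n]
          apply Real.rpow_le_rpow_of_exponent_ge hρ₂0 hρ₂1.le
          rw [div_le_iff₀ hB₂pos]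
          exact hcB
        calc P1 {x | c ≤ stat L ν lam 0 x n}
            ≤ ENNReal.ofReal (∑ w ∈ Finset.univ.filter
              (fun w : Fin n → 𝒳 =>
                c ≤ -(L n w : ℝ) - Real.logb 2 (wp ν w) - n * lam), wp μ1 w) := hstep
          _ ≤ ENNReal.ofReal ((2:ℝ)^(-(e/2)*c) + ρ₂ ^ (c/B₂)) := by
              apply ENNReal.ofReal_le_ofReal
              exact le_trans hsplit (add_le_add (hk.trans hexp) (hd.trans hρn))
      · -- empty case
        have hemp : {x | c ≤ stat L ν lam 0 x n} = ∅ := by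
          ext x
          simp only [Set.mem_setOf_eq, Set.mem_empty_iff_false, iff_false, not_le]
          calc stat L ν lam 0 x n ≤ (n:ℝ) * B₂ := by
                rw [hB₂def]
                exact stat_ub (L := L) hν hlam0 x n
            _ < c := lt_of_not_ge hcB
        rw [hemp, measure_empty]
        exact zero_le
    have hP : P1 {x | Nc L ν lam c x < ((m:ℕ):ℕ∞)}
        ≤ ENNReal.ofReal ((m:ℝ) * ((2:ℝ)^(-(e/2)*c) + ρ₂ ^ (c/B₂))) := by
      calc P1 {x | Nc L ν lam c x < ((m:ℕ):ℕ∞)}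
          ≤ ∑ n ∈ Finset.Icc 1 m, P1 {x | c ≤ stat L ν lam 0 x n} :=
            (measure_mono hsub).trans (measure_biUnion_finset_le _ _)
        _ ≤ ∑ _n ∈ Finset.Icc 1 m, ENNReal.ofReal ((2:ℝ)^(-(e/2)*c) + ρ₂ ^ (c/B₂)) :=
            Finset.sum_le_sum hband
        _ = ((Finset.Icc 1 m).card : ℝ≥0∞) * ENNReal.ofReal ((2:ℝ)^(-(e/2)*c) + ρ₂ ^ (c/B₂)) := by
            rw [Finset.sum_const, nsmul_eq_mul]
        _ = ENNReal.ofReal ((m:ℝ) * ((2:ℝ)^(-(e/2)*c) + ρ₂ ^ (c/B₂))) := by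
            rw [Nat.card_Icc]
            simp only [Nat.add_sub_cancel]
            rw [ENNReal.ofReal_mul (by positivity), ENNReal.ofReal_natCast]
    refine hP.trans (ENNReal.ofReal_le_ofReal ?_)
    have h2c : (2:ℝ)^(-(e/2)*c) = Real.exp (-(a₁ * c)) := by
      rw [Real.rpow_def_of_pos (by norm_num : (0:ℝ) < 2)]
      congr 1
      rw [ha₁def]
      ring
    have hρc : ρ₂ ^ (c/B₂) = Real.exp (-(a₂ * c)) := by
      rw [Real.rpow_def_of_pos hρ₂0]
      congr 1
      rw [ha₂def]
      field_simp
    have hm' : (m:ℝ) ≤ 1 + (1/(D μ1 ν - lam)) * c := by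
      have h1 : (1-e) * c / (D μ1 ν - lam) ≤ c / (D μ1 ν - lam) := by
        gcongr
        nlinarith
      have h3 : c / (D μ1 ν - lam) = (1/(D μ1 ν - lam)) * c := by ring
      linarith
    have hnn : (0:ℝ) ≤ (2:ℝ)^(-(e/2)*c) + ρ₂ ^ (c/B₂) :=
      add_nonneg (Real.rpow_nonneg (by norm_num) _) (Real.rpow_nonneg hρ₂0.le _)
    calc (m:ℝ) * ((2:ℝ)^(-(e/2)*c) + ρ₂ ^ (c/B₂))
        ≤ (1 + (1/(D μ1 ν - lam)) * c) * ((2:ℝ)^(-(e/2)*c) + ρ₂ ^ (c/B₂)) :=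
          mul_le_mul_of_nonneg_right hm' hnn
      _ = (1 + (1/(D μ1 ν - lam)) * c) * Real.exp (-(a₁ * c))
          + (1 + (1/(D μ1 ν - lam)) * c) * Real.exp (-(a₂ * c)) := by
          rw [h2c, hρc]; ring
      _ ≤ e := hδc.le
  -- ============ conclusion ============
  filter_upwards [upper, lower, eventually_ge_atTop (1:ℝ),
    eventually_ge_atTop (((n₁:ℝ) + 2 + K₁) * (D μ1 ν - lam) / e),
    eventually_ge_atTop ((D μ1 ν - lam) / e)] with c hup hlow hc1 hcC hcD
  have hc0 : (0:ℝ) < c := by linarith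
  set m := ⌊(1 - e) * c / (D μ1 ν - lam)⌋₊ with hmdef
  set Ex := lexp P1 (Nc L ν lam c) with hExdef
  have hEtop : Ex ≠ ⊤ := ne_top_of_le_ne_top ENNReal.ofReal_ne_top hup
  have hub : Ex.toReal ≤ ((n₁:ℝ) + 2 + K₁) + c / ((D μ1 ν - lam) * (1 - 2*e)) :=
    ENNReal.toReal_le_of_le_ofReal (by positivity) hup
  have hlb : (m:ℝ) * (1 - e) ≤ Ex.toReal := by
    have h2 : ENNReal.ofReal (1 - e) ≤ 1 - P1 {x | Nc L ν lam c x < ((m:ℕ):ℕ∞)} := by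
      have h3 : ENNReal.ofReal ((1:ℝ) - e) = 1 - ENNReal.ofReal e := by
        rw [ENNReal.ofReal_sub _ he0.le, ENNReal.ofReal_one]
      rw [h3]
      exact tsub_le_tsub_left hlow 1
    have h1 : ENNReal.ofReal ((m:ℝ) * (1 - e)) ≤ Ex := by
      calc ENNReal.ofReal ((m:ℝ) * (1-e))
          = (m:ℝ≥0∞) * ENNReal.ofReal (1-e) := by
            rw [ENNReal.ofReal_mul (by positivity), ENNReal.ofReal_natCast]
        _ ≤ (m:ℝ≥0∞) * (1 - P1 {x | Nc L ν lam c x < ((m:ℕ):ℕ∞)}) :=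
            mul_le_mul_right h2 _
        _ ≤ Ex := lexp_ge P1 (Nc L ν lam c) m
    calc (m:ℝ)*(1-e)
        = (ENNReal.ofReal ((m:ℝ)*(1-e))).toReal :=
          (ENNReal.toReal_ofReal (mul_nonneg (Nat.cast_nonneg m) (by linarith))).symm
      _ ≤ Ex.toReal := ENNReal.toReal_mono hEtop h1
  have key1 : Ex.toReal * (D μ1 ν - lam) ≤ (1 + 5*e) * c := by
    have hmul := mul_le_mul_of_nonneg_right hub hD'.le
    have h3 : c / ((D μ1 ν - lam) * (1 - 2*e)) * (D μ1 ν - lam) = c / (1 - 2*e) := by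
      field_simp
    have h4 : c / (1 - 2*e) ≤ (1 + 4*e) * c := by
      rw [div_le_iff₀ h2e]
      have h8 : (0:ℝ) ≤ 2*e - 16*e^2 := by nlinarith
      nlinarith [mul_nonneg hc0.le h8]
    have h2 : ((n₁:ℝ) + 2 + K₁) * (D μ1 ν - lam) ≤ e * c := by
      have h5 := (div_le_iff₀ he0).mp hcC
      linarith
    nlinarith [hmul, h3, h4, h2]
  have key2 : (1 - 3*e) * c ≤ Ex.toReal * (D μ1 ν - lam) := by
    have hm2 : (1-e) * c / (D μ1 ν - lam) - 1 ≤ (m:ℝ) := by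
      have h6 := Nat.lt_floor_add_one ((1-e) * c / (D μ1 ν - lam))
      rw [hmdef]
      linarith
    have hDe : (D μ1 ν - lam) ≤ e * c := by
      have h7 := (div_le_iff₀ he0).mp hcD
      linarith
    have hmul := mul_le_mul_of_nonneg_right hlb hD'.le
    have hId : ((1-e) * c / (D μ1 ν - lam)) * ((1-e) * (D μ1 ν - lam)) = (1-e)^2 * c := by
      field_simp
    have h5 := mul_le_mul_of_nonneg_right hm2
      (mul_nonneg (by linarith : (0:ℝ) ≤ 1 - e) hD'.le)
    nlinarith [h5, hmul, hId, hDe, mul_nonneg (mul_nonneg he0.le he0.le) hc0.le,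
      mul_nonneg he0.le hD'.le]
  have hG1 : Ex.toReal * (D μ1 ν - lam) / c ≤ 1 + 5*e := by
    rw [div_le_iff₀ hc0]
    linarith [key1]
  have hG2 : 1 - 3*e ≤ Ex.toReal * (D μ1 ν - lam) / c := by
    rw [le_div_iff₀ hc0]
    linarith [key2]
  rw [Real.dist_eq, abs_of_pos hc0, abs_lt]
  constructor
  · linarith [hG2, heε, he0]
  · linarith [hG1, heε, he0]


/-- asymptotics of the expected stopping time under the post-change
source: `E_{μ1}(N(α)) ~ |log α| / (D(μ1‖ν) − λ)` as `α → 0`. -/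
theorem stmt7 {𝒳 : Type} [Fintype 𝒳] [Nonempty 𝒳] [MeasurableSpace 𝒳]
    (μ1 ν : 𝒳 → ℝ) (hμ1 : IsPosPMF μ1) (hν : IsPosPMF ν)
    (L : (n : ℕ) → (Fin n → 𝒳) → ℕ) (hL : Kraft L) (hU : StronglyUniversal L)
    (lam : ℝ) (hlam0 : 0 < lam) (hlam1 : lam < D μ1 ν)
    (P1 : Measure (ℕ → 𝒳)) (hP1 : IsIIDLaw μ1 P1) :
    Tendsto (fun α : ℝ =>
        (lexp P1 (Naux L ν lam α 0)).toReal * (D μ1 ν - lam) / |Real.logb 2 α|)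
      (𝓝[>] 0) (𝓝 1) := by
  have hmain := main_tendsto μ1 ν hμ1 hν L hL hU lam hlam0 hlam1 P1 hP1
  have hlog : Tendsto (fun α : ℝ => -Real.logb 2 α) (𝓝[>] (0:ℝ)) atTop := by
    have h2 : Tendsto Real.log (𝓝[>] (0:ℝ)) atBot := Real.tendsto_log_nhdsGT_zero
    have hdiv : Tendsto (fun x : ℝ => x / Real.log 2) atBot atBot :=
      Tendsto.atBot_div_const (Real.log_pos one_lt_two) tendsto_id
    have hneg : Tendsto (fun x : ℝ => -(x / Real.log 2)) atBot atTop :=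
      tendsto_neg_atBot_atTop.comp hdiv
    have h3 := (hneg.comp h2)
    refine h3.congr fun α => ?_
    simp [Real.logb, Function.comp]
  have hc := hmain.comp hlog
  refine hc.congr fun α => ?_
  simp only [Function.comp_apply]
  rw [abs_neg]
  rfl


end ChangeDetect
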